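/- arXiv:2603.06769 — 5 statements merged into one kernel-verified Lean document; each statement's English description precedes it below -/
import Mathlib

section
/- Let φ : (0,∞) → ℝ be continuous and non-constant on every nonempty open subinterval (a,b) ⊂ (0,∞). Suppose there exists a function f defined on {(s,t) : 0 < s < t} such that for every pair 0 < s < t the quantity φ(t−τ) − f(s,t)·φ(s−τ) takes the same value for all τ ∈ (0,s). Then there exists a real constant β such that f(s,t) = exp(−β(t−s)) for all 0 < s < t. -/
/-- If φ is continuous on (0,∞) and non-constant on every nonempty open
subinterval of (0,∞), and f(s,t) is such that φ(t−τ) − f(s,t)·φ(s−τ) does not depend on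
τ ∈ (0,s) for every 0 < s < t, then f(s,t) = exp(−β(t−s)) for some real β. -/
theorem stmt_0 (φ : ℝ → ℝ) (f : ℝ → ℝ → ℝ)
    (hcont : ContinuousOn φ (Set.Ioi 0))
    (hnc : ∀ a b : ℝ, 0 ≤ a → a < b →
      ∃ x ∈ Set.Ioo a b, ∃ y ∈ Set.Ioo a b, φ x ≠ φ y)
    (hf : ∀ s t : ℝ, 0 < s → s < t →
      ∃ c : ℝ, ∀ τ ∈ Set.Ioo (0 : ℝ) s, φ (t - τ) - f s t * φ (s - τ) = c) :
    ∃ β : ℝ, ∀ s t : ℝ, 0 < s → s < t → f s t = Real.exp (-β * (t - s)) := by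
  obtain ⟨u1, hu1, u2, hu2, hne⟩ := hnc 0 1 le_rfl one_pos
  have hu1p : 0 < u1 := hu1.1
  have hu2p : 0 < u2 := hu2.1
  have hd : φ u1 - φ u2 ≠ 0 := sub_ne_zero.mpr hne
  set G : ℝ → ℝ := fun h => (φ (u1 + h) - φ (u2 + h)) / (φ u1 - φ u2) with hGdef
  -- Lemma A: the "transfer coefficient" over step h is G h, for any two base points
  have lemA : ∀ h u v : ℝ, 0 < h → 0 < u → 0 < v →
      φ (u + h) - φ (v + h) = G h * (φ u - φ v) := by
    intro h u v hh hu hv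
    set s := u + v + u1 + u2 + 1 with hs
    have hspos : 0 < s := by positivity
    obtain ⟨c, hc⟩ := hf s (s + h) hspos (by linarith)
    have key : ∀ w : ℝ, 0 < w → w < s → φ (w + h) = f s (s + h) * φ w + c := by
      intro w hw hws
      have h1 := hc (s - w) ⟨by linarith, by linarith⟩
      have e1 : s + h - (s - w) = w + h := by ring
      have e2 : s - (s - w) = w := by ring
      rw [e1, e2] at h1
      linarith
    have k1 := key u hu (by nlinarith [hu1p, hu2p])
    have k2 := key v hv (by nlinarith [hu1p, hu2p])
    have k3 := key u1 hu1p (by nlinarith)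
    have k4 := key u2 hu2p (by nlinarith)
    have hfG : G h = f s (s + h) := by
      rw [hGdef]
      simp only
      rw [k3, k4]
      field_simp
      ring
    rw [hfG]
    rw [k1, k2]; ring
  -- f s t = G (t - s)
  have hfG : ∀ s t : ℝ, 0 < s → s < t → f s t = G (t - s) := by
    intro s t hs hst
    obtain ⟨x, hx, y, hy, hxy⟩ := hnc 0 s le_rfl hs
    obtain ⟨c, hc⟩ := hf s t hs hst
    have key : ∀ w : ℝ, 0 < w → w < s → φ (w + (t - s)) = f s t * φ w + c := by
      intro w hw hws
      have h1 := hc (s - w) ⟨by linarith, by linarith⟩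
      have e1 : t - (s - w) = w + (t - s) := by ring
      have e2 : s - (s - w) = w := by ring
      rw [e1, e2] at h1
      linarith
    have k1 := key x hx.1 hx.2
    have k2 := key y hy.1 hy.2
    have hA := lemA (t - s) x y (by linarith) hx.1 hy.1
    have hdxy : φ x - φ y ≠ 0 := sub_ne_zero.mpr hxy
    have : (f s t - G (t - s)) * (φ x - φ y) = 0 := by
      rw [sub_mul]
      rw [← hA]
      rw [k1, k2]; ring
    rcases mul_eq_zero.mp this with h | h
    · linarith [sub_eq_zero.mp h]
    · exact absurd h hdxy
  -- G nonzero on (0, ∞)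
  have hGne : ∀ h : ℝ, 0 < h → G h ≠ 0 := by
    intro h hh h0
    obtain ⟨x, hx, y, hy, hxy⟩ := hnc h (h + 1) hh.le (by linarith)
    have hA := lemA h (x - h) (y - h) hh (by linarith [hx.1]) (by linarith [hy.1])
    rw [h0] at hA
    have e1 : x - h + h = x := by ring
    have e2 : y - h + h = y := by ring
    rw [e1, e2] at hA
    exact hxy (by linarith)
  -- G multiplicative
  have hGmul : ∀ a b : ℝ, 0 < a → 0 < b → G (a + b) = G a * G b := by
    intro a b ha hb
    have h1 := lemA (a + b) u1 u2 (by linarith) hu1p hu2p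
    have h2 := lemA b (u1 + a) (u2 + a) hb (by linarith) (by linarith)
    have h3 := lemA a u1 u2 ha hu1p hu2p
    have e1 : u1 + a + b = u1 + (a + b) := by ring
    have e2 : u2 + a + b = u2 + (a + b) := by ring
    rw [e1, e2] at h2
    have : (G (a + b) - G a * G b) * (φ u1 - φ u2) = 0 := by
      rw [sub_mul, ← h1, h2, h3]; ring
    rcases mul_eq_zero.mp this with h | h
    · linarith [sub_eq_zero.mp h]
    · exact absurd h hd
  -- G positive
  have hGpos : ∀ h : ℝ, 0 < h → 0 < G h := by
    intro h hh
    have h2 : 0 < h / 2 := by linarith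
    have : G h = G (h / 2) * G (h / 2) := by
      have := hGmul (h / 2) (h / 2) h2 h2
      rw [← this]; norm_num
    rw [this]
    exact mul_self_pos.mpr (hGne (h / 2) h2)
  -- G continuous on (0, ∞)
  have hGcont : ContinuousOn G (Set.Ioi 0) := by
    apply ContinuousOn.div_const
    apply ContinuousOn.sub
    · apply ContinuousOn.comp hcont (by fun_prop)
      intro x hx
      simp only [Set.mem_Ioi] at *
      linarith
    · apply ContinuousOn.comp hcont (by fun_prop)
      intro x hx
      simp only [Set.mem_Ioi] at *
      linarith
  set L : ℝ → ℝ := fun h => Real.log (G h) with hLdef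
  have hLadd : ∀ a b : ℝ, 0 < a → 0 < b → L (a + b) = L a + L b := by
    intro a b ha hb
    rw [hLdef]
    simp only
    rw [hGmul a b ha hb, Real.log_mul (hGne a ha) (hGne b hb)]
  have hLcont : ∀ p : ℝ, 0 < p → ContinuousAt L p := by
    intro p hp
    have hGc : ContinuousAt G p :=
      hGcont.continuousAt (isOpen_Ioi.mem_nhds hp)
    exact (Real.continuousAt_log (hGne p hp)).comp hGc
  -- well-definedness of the extension
  have hMspec : ∀ x K K' : ℝ, 0 < K → 0 < K' → 0 < x + K → 0 < x + K' →
      L (x + K) - L K = L (x + K') - L K' := by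
    intro x K K' hK hK' hxK hxK'
    have h1 : L (x + K + K') = L (x + K) + L K' := hLadd _ _ hxK hK'
    have h2 : L (x + K' + K) = L (x + K') + L K := hLadd _ _ hxK' hK
    have e : x + K + K' = x + K' + K := by ring
    rw [e] at h1
    linarith
  set M : ℝ → ℝ := fun x => L (x + (|x| + 1)) - L (|x| + 1) with hMdef
  have hMspec' : ∀ x K : ℝ, 0 < K → 0 < x + K → M x = L (x + K) - L K := by
    intro x K hK hxK
    rw [hMdef]
    simp only
    exact hMspec x (|x| + 1) K (by positivity) hK (by nlinarith [neg_abs_le x, abs_nonneg x]) hxK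
  have hMadd : ∀ x y : ℝ, M (x + y) = M x + M y := by
    intro x y
    have hK1 : (0:ℝ) < |x| + 1 := by positivity
    have hK2 : (0:ℝ) < |y| + 1 := by positivity
    have hx1 : 0 < x + (|x| + 1) := by nlinarith [neg_abs_le x]
    have hy1 : 0 < y + (|y| + 1) := by nlinarith [neg_abs_le y]
    have h1 : M (x + y) = L (x + y + ((|x| + 1) + (|y| + 1))) - L ((|x| + 1) + (|y| + 1)) :=
      hMspec' (x + y) _ (by positivity) (by nlinarith [neg_abs_le x, neg_abs_le y])
    have e : x + y + ((|x| + 1) + (|y| + 1)) = (x + (|x| + 1)) + (y + (|y| + 1)) := by ring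
    rw [e, hLadd _ _ hx1 hy1, hLadd _ _ hK1 hK2] at h1
    rw [h1, hMdef]
    simp only
    ring
  have hMcont : Continuous M := by
    rw [continuous_iff_continuousAt]
    intro x0
    set K := |x0| + 2 with hK
    have hKpos : (0:ℝ) < K := by positivity
    have heq : ∀ᶠ x in nhds x0, M x = L (x + K) - L K := by
      have : Set.Ioo (x0 - 1) (x0 + 1) ∈ nhds x0 :=
        Ioo_mem_nhds (by linarith) (by linarith)
      filter_upwards [this] with x hx
      exact hMspec' x K hKpos (by nlinarith [neg_abs_le x0, hx.1])
    have hc : ContinuousAt (fun x => L (x + K) - L K) x0 := by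
      apply ContinuousAt.sub _ continuousAt_const
      have h1 : ContinuousAt L (x0 + K) := hLcont _ (by nlinarith [neg_abs_le x0])
      have h2 : ContinuousAt (fun x : ℝ => x + K) x0 := by fun_prop
      show ContinuousAt (L ∘ fun x : ℝ => x + K) x0
      exact ContinuousAt.comp (x := x0) (f := fun x : ℝ => x + K) (g := L) h1 h2
    exact hc.congr (Filter.EventuallyEq.symm heq)
  -- M is additive and continuous, hence linear
  have hMlin : ∀ x : ℝ, M x = x * M 1 := by
    set Mhom : ℝ →+ ℝ := AddMonoidHom.mk' M hMadd with hMhom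
    have := Mhom.toRealLinearMap hMcont
    intro x
    have h := (Mhom.toRealLinearMap hMcont).map_smul x 1
    simpa [AddMonoidHom.coe_toRealLinearMap, smul_eq_mul, hMhom] using h
  refine ⟨-(M 1), ?_⟩
  intro s t hs hst
  have hh : 0 < t - s := by linarith
  have hLM : M (t - s) = L (t - s) := by
    have := hMspec' (t - s) 1 one_pos (by linarith)
    rw [this, hLadd _ _ hh one_pos]; ring
  rw [hfG s t hs hst]
  have : Real.exp (-(-(M 1)) * (t - s)) = Real.exp (L (t - s)) := by
    congr 1
    rw [← hLM, hMlin (t - s)]; ring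
  rw [this, hLdef]
  simp only
  rw [Real.exp_log (hGpos _ hh)]
end

section
/- Let β > 0 and let φ : (0,∞) → ℝ be any function. Suppose that for every pair 0 < s < t the quantity φ(t−τ) − exp(−β(t−s))·φ(s−τ) takes the same value for all τ ∈ (0,s). Then there exist real constants δ and α such that φ(x) = δ + α·exp(−βx) for all x > 0. -/
/-- If for every 0 < s < t the quantity
φ(t−τ) − exp(−β(t−s))·φ(s−τ) is independent of τ ∈ (0,s), where β > 0,
then φ(x) = δ + α·exp(−βx) on (0,∞) for some real constants δ, α. -/
theorem stmt_1 (β : ℝ) (hβ : 0 < β) (φ : ℝ → ℝ)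
    (hf : ∀ s t : ℝ, 0 < s → s < t →
      ∃ c : ℝ, ∀ τ ∈ Set.Ioo (0 : ℝ) s,
        φ (t - τ) - Real.exp (-β * (t - s)) * φ (s - τ) = c) :
    ∃ δ α : ℝ, ∀ x : ℝ, 0 < x → φ x = δ + α * Real.exp (-β * x) := by
  have expadd : ∀ x y z : ℝ, x + y = z → Real.exp x * Real.exp y = Real.exp z := by
    intro x y z h; rw [← Real.exp_add, h]
  -- Step 1: the key functional equation
  have key : ∀ a h d : ℝ, 0 < a → 0 < h → 0 < d →
      φ (a + d + h) - φ (a + d) = Real.exp (-β * d) * (φ (a + h) - φ a) := by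
    intro a h d ha hh hd
    obtain ⟨c, hc⟩ := hf (a + h + 1) (a + h + 1 + d) (by linarith) (by linarith)
    have h1 := hc (h + 1) ⟨by linarith, by linarith⟩
    have h2 := hc 1 ⟨one_pos, by linarith⟩
    rw [show a + h + 1 + d - (h + 1) = a + d from by ring,
        show a + h + 1 - (h + 1) = a from by ring,
        show a + h + 1 + d - (a + h + 1) = d from by ring] at h1
    rw [show a + h + 1 + d - 1 = a + d + h from by ring,
        show a + h + 1 - 1 = a + h from by ring,
        show a + h + 1 + d - (a + h + 1) = d from by ring] at h2
    linear_combination h2 - h1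
  -- Step 2: exp(βa)(φ(a+h)-φ(a)) is independent of a
  have scale : ∀ a h : ℝ, 0 < a → 0 < h →
      Real.exp (β * a) * (φ (a + h) - φ a) = Real.exp β * (φ (1 + h) - φ 1) := by
    intro a h ha hh
    rcases lt_trichotomy a 1 with hlt | heq | hgt
    · have k := key a h (1 - a) ha hh (by linarith)
      rw [show a + (1 - a) + h = 1 + h from by ring,
          show a + (1 - a) = 1 from by ring] at k
      have fact : Real.exp β * Real.exp (-β * (1 - a)) = Real.exp (β * a) :=
        expadd _ _ _ (by ring)
      linear_combination (-(φ (a + h) - φ a)) * fact - Real.exp β * k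
    · subst heq; norm_num
    · have k := key 1 h (a - 1) one_pos hh (by linarith)
      rw [show (1 : ℝ) + (a - 1) + h = a + h from by ring,
          show (1 : ℝ) + (a - 1) = a from by ring] at k
      have fact : Real.exp (β * a) * Real.exp (-β * (a - 1)) = Real.exp β :=
        expadd _ _ _ (by ring)
      linear_combination Real.exp (β * a) * k + (φ (1 + h) - φ 1) * fact
  -- Step 3: additivity relation for C(h) = exp β * (φ(1+h) - φ 1)
  have addC : ∀ h k : ℝ, 0 < h → 0 < k →
      Real.exp β * (φ (1 + (h + k)) - φ 1) =
        Real.exp β * (φ (1 + h) - φ 1) +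
          Real.exp (-β * h) * (Real.exp β * (φ (1 + k) - φ 1)) := by
    intro h k hh hk
    have s1 := scale (1 + h) k (by linarith) hk
    rw [show (1 : ℝ) + h + k = 1 + (h + k) from by ring] at s1
    have fact : Real.exp (-β * h) * Real.exp (β * (1 + h)) = Real.exp β :=
      expadd _ _ _ (by ring)
    linear_combination Real.exp (-β * h) * s1 -
      (φ (1 + (h + k)) - φ (1 + h)) * fact
  -- Step 4: solve the Cauchy-type equation
  have hlt1 : Real.exp (-β) < 1 := by
    rw [Real.exp_lt_one_iff]; linarith
  have hne : (1 : ℝ) - Real.exp (-β) ≠ 0 := by linarith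
  set K : ℝ := Real.exp β * (φ (1 + 1) - φ 1) / (1 - Real.exp (-β)) with hKdef
  have hK : ∀ h : ℝ, 0 < h →
      Real.exp β * (φ (1 + h) - φ 1) = K * (1 - Real.exp (-β * h)) := by
    intro h hh
    have e1 := addC h 1 hh one_pos
    have e2 := addC 1 h one_pos hh
    rw [show h + (1 : ℝ) = 1 + h from by ring] at e1
    rw [show -β * (1 : ℝ) = -β from by ring] at e2
    rw [hKdef, div_mul_eq_mul_div, eq_div_iff hne]
    linear_combination e2 - e1
  -- Step 5: φ(x) + K exp(-βx) is constant
  have main : ∀ a x : ℝ, 0 < a → a < x →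
      φ x + K * Real.exp (-β * x) = φ a + K * Real.exp (-β * a) := by
    intro a x ha hax
    have s := scale a (x - a) ha (by linarith)
    rw [show a + (x - a) = x from by ring] at s
    rw [hK (x - a) (by linarith)] at s
    -- s : exp(β a) * (φ x - φ a) = K * (1 - exp(-β(x-a)))
    have h1 : φ x - φ a = Real.exp (-β * a) * (K * (1 - Real.exp (-β * (x - a)))) := by
      apply mul_left_cancel₀ (Real.exp_ne_zero (β * a))
      rw [s, ← mul_assoc, ← Real.exp_add,
          show β * a + -β * a = 0 from by ring, Real.exp_zero, one_mul]
    have h2 : Real.exp (-β * a) * Real.exp (-β * (x - a)) = Real.exp (-β * x) :=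
      expadd _ _ _ (by ring)
    linear_combination h1 - K * h2
  -- Step 6: conclude
  refine ⟨φ 1 + K * Real.exp (-β * 1), -K, ?_⟩
  intro x hx
  set a : ℝ := min x 1 / 2 with hadef
  have hmin : 0 < min x 1 := lt_min hx one_pos
  have ha : 0 < a := by positivity
  have hax : a < x := by
    have : min x 1 ≤ x := min_le_left _ _
    have : a < min x 1 := by rw [hadef]; linarith
    linarith
  have ha1 : a < 1 := by
    have : min x 1 ≤ 1 := min_le_right _ _
    have : a < min x 1 := by rw [hadef]; linarith
    linarith
  have m1 := main a x ha hax
  have m2 := main a 1 ha ha1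
  linarith
end

section
/- Let φ : (0,∞) → ℝ be continuous and non-constant on every nonempty open subinterval of (0,∞). Suppose there exists a function f on {(s,t) : 0 < s < t} such that for every 0 < s < t the quantity φ(t−τ) − f(s,t)·φ(s−τ) takes the same value for all τ ∈ (0,s). Then either φ is an affine function (φ(x) = δ + c·x for some reals δ, c with c ≠ 0, and f ≡ 1), or there exist real constants δ, α, β with β ≠ 0 and α ≠ 0 such that φ(x) = δ + α·exp(−βx) for all x > 0 and f(s,t) = exp(−β(t−s)) for all 0 < s < t. -/
lemma cauchy_pos (g : ℝ → ℝ) (hg : ContinuousOn g (Set.Ioi 0))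
    (hadd : ∀ a b : ℝ, 0 < a → 0 < b → g (a + b) = g a + g b) :
    ∀ x : ℝ, 0 < x → g x = x * g 1 := by
  set G : ℝ → ℝ := fun x => g (x + (|x| + 1)) - g (|x| + 1) with hGdefn
  have hGdef : ∀ x n : ℝ, 0 < n → 0 < x + n → G x = g (x + n) - g n := by
    intro x n hn hxn
    have h1 : (0:ℝ) < |x| + 1 := by positivity
    have h2 : 0 < x + (|x| + 1) := by
      have := neg_abs_le x; linarith
    have e1 : g (x + n + (|x| + 1)) = g (x + n) + g (|x| + 1) := hadd _ _ hxn h1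
    have e2 : g (x + (|x| + 1) + n) = g (x + (|x| + 1)) + g n := hadd _ _ h2 hn
    have e3 : x + n + (|x| + 1) = x + (|x| + 1) + n := by ring
    rw [e3, e2] at e1
    simp only [hGdefn]
    linarith
  have hGadd : ∀ x y : ℝ, G (x + y) = G x + G y := by
    intro x y
    have hax := abs_nonneg x
    have hay := abs_nonneg y
    have hnx := neg_abs_le x
    have hny := neg_abs_le y
    set n := |x| + |y| + 1 with hn
    have hn0 : (0:ℝ) < n := by positivity
    have hx : 0 < x + n := by simp only [hn]; linarith
    have hy : 0 < y + n := by simp only [hn]; linarith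
    have hxy : 0 < x + y + (n + n) := by simp only [hn]; linarith
    rw [hGdef (x+y) (n+n) (by linarith) hxy, hGdef x n hn0 hx, hGdef y n hn0 hy]
    have e := hadd (x+n) (y+n) hx hy
    have e2 : x + n + (y + n) = x + y + (n + n) := by ring
    rw [e2] at e
    have e4 := hadd n n hn0 hn0
    linarith
  have hGcont : Continuous G := by
    rw [continuous_iff_continuousAt]
    intro x0
    have hax0 := abs_nonneg x0
    have hnx0 := neg_abs_le x0
    have hn : (0:ℝ) < |x0| + 2 := by positivity
    have hc : ContinuousAt (fun x => g (x + (|x0| + 2)) - g (|x0| + 2)) x0 := by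
      apply ContinuousAt.sub _ continuousAt_const
      have h1 : ContinuousAt (fun x : ℝ => x + (|x0| + 2)) x0 := by fun_prop
      have h2 : ContinuousAt g (x0 + (|x0| + 2)) :=
        hg.continuousAt (isOpen_Ioi.mem_nhds (by simp only [Set.mem_Ioi]; linarith))
      exact ContinuousAt.comp (x := x0) h2 h1
    apply hc.congr
    filter_upwards [Metric.ball_mem_nhds x0 one_pos] with x hx
    have hxx : |x - x0| < 1 := by simpa [Real.dist_eq] using hx
    have h1 := abs_lt.mp hxx
    exact (hGdef x (|x0| + 2) hn (by linarith)).symm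
  intro x hx
  have hG1 : ∀ y : ℝ, 0 < y → G y = g y := by
    intro y hy
    rw [hGdef y 1 one_pos (by linarith), hadd y 1 hy one_pos]
    ring
  have hlin : G x = x * G 1 := by
    have := map_real_smul (AddMonoidHom.mk' G hGadd) hGcont x 1
    simpa [smul_eq_mul] using this
  rw [← hG1 x hx, ← hG1 1 one_pos, hlin]

/-- If φ is continuous and non-constant on every nonempty open subinterval
of (0,∞), and some discount function f makes φ(t−τ) − f(s,t)·φ(s−τ) independent of
τ ∈ (0,s) for every 0 < s < t, then either φ is affine (with f ≡ 1), or
φ(x) = δ + α·exp(−βx) with α, β ≠ 0 and f(s,t) = exp(−β(t−s)). -/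
theorem stmt_3 (φ : ℝ → ℝ) (f : ℝ → ℝ → ℝ)
    (hcont : ContinuousOn φ (Set.Ioi 0))
    (hnc : ∀ a b : ℝ, 0 ≤ a → a < b →
      ∃ x ∈ Set.Ioo a b, ∃ y ∈ Set.Ioo a b, φ x ≠ φ y)
    (hf : ∀ s t : ℝ, 0 < s → s < t →
      ∃ c : ℝ, ∀ τ ∈ Set.Ioo (0 : ℝ) s, φ (t - τ) - f s t * φ (s - τ) = c) :
    (∃ δ c : ℝ, c ≠ 0 ∧ (∀ x : ℝ, 0 < x → φ x = δ + c * x) ∧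
      (∀ s t : ℝ, 0 < s → s < t → f s t = 1)) ∨
    (∃ δ α β : ℝ, β ≠ 0 ∧ α ≠ 0 ∧
      (∀ x : ℝ, 0 < x → φ x = δ + α * Real.exp (-β * x)) ∧
      (∀ s t : ℝ, 0 < s → s < t → f s t = Real.exp (-β * (t - s)))) := by
  classical
  -- uniqueness of affine coefficients against φ on an interval
  have key : ∀ s : ℝ, 0 < s → ∀ a b a' b' : ℝ,
      (∀ u ∈ Set.Ioo (0:ℝ) s, a * φ u + b = a' * φ u + b') → a = a' ∧ b = b' := by
    intro s hs a b a' b' h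
    obtain ⟨x, hx, y, hy, hxy⟩ := hnc 0 s le_rfl hs
    have h1 := h x hx
    have h2 := h y hy
    have ha : a = a' := by
      by_contra hne
      apply hxy
      have hx2 : (a - a') * φ x = (a - a') * φ y := by linarith
      exact mul_left_cancel₀ (sub_ne_zero.mpr hne) hx2
    refine ⟨ha, ?_⟩
    rw [ha] at h1
    linarith
  -- translation form of the hypothesis
  have hrel : ∀ s t : ℝ, 0 < s → s < t →
      ∃ c, ∀ u ∈ Set.Ioo (0:ℝ) s, φ (u + (t - s)) = f s t * φ u + c := by
    intro s t hs hst
    obtain ⟨c, hc⟩ := hf s t hs hst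
    refine ⟨c, fun u hu => ?_⟩
    have h1 : s - u ∈ Set.Ioo (0:ℝ) s := ⟨by linarith [hu.2], by linarith [hu.1]⟩
    have h2 := hc (s - u) h1
    have ht : t - (s - u) = u + (t - s) := by ring
    have ht2 : s - (s - u) = u := by ring
    rw [ht, ht2] at h2
    linarith
  set F : ℝ → ℝ := fun h => f 1 (1 + h) with hFdef
  have hFC0 : ∀ h : ℝ, ∃ c, 0 < h → ∀ u ∈ Set.Ioo (0:ℝ) 1, φ (u + h) = F h * φ u + c := by
    intro h
    by_cases hh : 0 < h
    · obtain ⟨c, hc⟩ := hrel 1 (1 + h) one_pos (by linarith)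
      refine ⟨c, fun _ u hu => ?_⟩
      have := hc u hu
      simpa [add_sub_cancel_left] using this
    · exact ⟨0, fun h' => absurd h' hh⟩
  choose C hC using hFC0
  -- global translation relation
  have hFCg : ∀ h : ℝ, 0 < h → ∀ u : ℝ, 0 < u → φ (u + h) = F h * φ u + C h := by
    intro h hh u hu
    obtain ⟨c, hc⟩ := hrel (u + 1) (u + 1 + h) (by linarith) (by linarith)
    have hsub : u + 1 + h - (u + 1) = h := by ring
    rw [hsub] at hc
    have heq : ∀ v ∈ Set.Ioo (0:ℝ) 1, f (u+1) (u+1+h) * φ v + c = F h * φ v + C h := by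
      intro v hv
      have h1 := hc v ⟨hv.1, by linarith [hv.2]⟩
      have h2 := hC h hh v hv
      linarith
    obtain ⟨ha, hb⟩ := key 1 one_pos _ _ _ _ heq
    have h3 := hc u ⟨hu, by linarith⟩
    rw [ha, hb] at h3
    exact h3
  -- f is determined by F
  have hfF : ∀ s t : ℝ, 0 < s → s < t → f s t = F (t - s) := by
    intro s t hs hst
    obtain ⟨c, hc⟩ := hrel s t hs hst
    have hm : (0:ℝ) < min s 1 := lt_min hs one_pos
    have heq : ∀ v ∈ Set.Ioo (0:ℝ) (min s 1),
        f s t * φ v + c = F (t-s) * φ v + C (t-s) := by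
      intro v hv
      have h1 := hc v ⟨hv.1, lt_of_lt_of_le hv.2 (min_le_left _ _)⟩
      have h2 := hFCg (t-s) (by linarith) v hv.1
      linarith
    exact (key (min s 1) hm _ _ _ _ heq).1
  -- cocycle / multiplicativity
  have hmul : ∀ a b : ℝ, 0 < a → 0 < b →
      F (a + b) = F a * F b ∧ C (a + b) = F b * C a + C b := by
    intro a b ha hb
    have heq : ∀ u ∈ Set.Ioo (0:ℝ) 1,
        F (a+b) * φ u + C (a+b) = (F a * F b) * φ u + (F b * C a + C b) := by
      intro u hu
      have h1 := hFCg (a+b) (by linarith) u hu.1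
      have h2 := hFCg a ha u hu.1
      have h3 := hFCg b hb (u + a) (by linarith [hu.1])
      have e : u + (a + b) = u + a + b := by ring
      rw [e] at h1
      rw [h2] at h3
      calc F (a+b) * φ u + C (a+b) = φ (u+a+b) := h1.symm
        _ = F b * (F a * φ u + C a) + C b := h3
        _ = (F a * F b) * φ u + (F b * C a + C b) := by ring
    exact key 1 one_pos _ _ _ _ heq
  have hFne : ∀ h : ℝ, 0 < h → F h ≠ 0 := by
    intro h hh h0
    obtain ⟨x, hx, y, hy, hxy⟩ := hnc h (h + 1) (le_of_lt hh) (by linarith)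
    have e1 : φ x = C h := by
      have := hFCg h hh (x - h) (by linarith [hx.1])
      rw [h0] at this
      simpa using this
    have e2 : φ y = C h := by
      have := hFCg h hh (y - h) (by linarith [hy.1])
      rw [h0] at this
      simpa using this
    exact hxy (e1.trans e2.symm)
  have hFpos : ∀ h : ℝ, 0 < h → 0 < F h := by
    intro h hh
    have h2 : 0 < h/2 := by linarith
    have e := (hmul (h/2) (h/2) h2 h2).1
    have e2 : h/2 + h/2 = h := by ring
    rw [e2] at e
    rw [e]
    exact mul_self_pos.mpr (hFne _ h2)
  -- continuity of F and C
  obtain ⟨u0, hu0, v0, hv0, huv⟩ := hnc 0 1 le_rfl one_pos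
  have hsub : φ u0 - φ v0 ≠ 0 := sub_ne_zero.mpr huv
  have hFrep : ∀ h : ℝ, 0 < h → F h = (φ (u0 + h) - φ (v0 + h)) / (φ u0 - φ v0) := by
    intro h hh
    have h1 := hFCg h hh u0 hu0.1
    have h2 := hFCg h hh v0 hv0.1
    rw [eq_div_iff hsub, mul_sub]
    linarith
  have hcomp : ∀ w : ℝ, 0 < w → ContinuousOn (fun h : ℝ => φ (w + h)) (Set.Ioi 0) := by
    intro w hw
    apply hcont.comp (continuous_const.add continuous_id).continuousOn
    intro h hh
    simp only [Set.mem_Ioi, id_eq, Pi.add_apply] at *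
    linarith
  have hFcont : ContinuousOn F (Set.Ioi 0) := by
    have hc2 : ContinuousOn (fun h => (φ (u0 + h) - φ (v0 + h)) / (φ u0 - φ v0))
        (Set.Ioi 0) :=
      ((hcomp u0 hu0.1).sub (hcomp v0 hv0.1)).div_const _
    exact hc2.congr (fun h hh => hFrep h (Set.mem_Ioi.mp hh))
  have hlogadd : ∀ a b : ℝ, 0 < a → 0 < b →
      Real.log (F (a + b)) = Real.log (F a) + Real.log (F b) := fun a b ha hb => by
    rw [(hmul a b ha hb).1, Real.log_mul (hFne a ha) (hFne b hb)]
  have hL := cauchy_pos (fun h => Real.log (F h))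
    (hFcont.log (fun h hh => ne_of_gt (hFpos h (Set.mem_Ioi.mp hh)))) hlogadd
  set L : ℝ := Real.log (F 1) with hLdef
  have hFexp : ∀ h : ℝ, 0 < h → F h = Real.exp (L * h) := by
    intro h hh
    have h2 : Real.log (F h) = h * Real.log (F 1) := hL h hh
    rw [← Real.exp_log (hFpos h hh), h2, mul_comm]
  have hconst : ∀ Φ : ℝ → ℝ, (∀ x h : ℝ, 0 < x → 0 < h → Φ (x + h) = Φ x) →
      ∀ x y : ℝ, 0 < x → 0 < y → Φ x = Φ y := by
    intro Φ hΦ x y hx hy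
    rcases lt_trichotomy x y with h | h | h
    · have := hΦ x (y - x) hx (by linarith)
      rw [show x + (y - x) = y by ring] at this
      exact this.symm
    · rw [h]
    · have := hΦ y (x - y) hy (by linarith)
      rw [show y + (x - y) = x by ring] at this
      exact this
  by_cases hL0 : L = 0
  · -- affine case
    left
    have hF1 : ∀ h : ℝ, 0 < h → F h = 1 := by
      intro h hh; rw [hFexp h hh, hL0]; simp
    have hCadd : ∀ a b : ℝ, 0 < a → 0 < b → C (a + b) = C a + C b := by
      intro a b ha hb
      have := (hmul a b ha hb).2
      rw [hF1 b hb] at this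
      linarith
    have hCrep : ∀ h : ℝ, 0 < h → C h = φ (u0 + h) - φ u0 := by
      intro h hh
      have h1 := hFCg h hh u0 hu0.1
      rw [hF1 h hh] at h1
      linarith
    have hCcont : ContinuousOn C (Set.Ioi 0) := by
      have hc2 : ContinuousOn (fun h => φ (u0 + h) - φ u0) (Set.Ioi 0) :=
        (hcomp u0 hu0.1).sub continuousOn_const
      exact hc2.congr (fun h hh => hCrep h (Set.mem_Ioi.mp hh))
    have hClin := cauchy_pos C hCcont hCadd
    set c : ℝ := C 1 with hcdef
    have hΦ : ∀ x h : ℝ, 0 < x → 0 < h → φ (x + h) - c * (x + h) = φ x - c * x := by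
      intro x h hx hh
      have h1 := hFCg h hh x hx
      rw [hF1 h hh, hClin h hh] at h1
      ring_nf
      ring_nf at h1
      linarith
    have hδ : ∀ x y : ℝ, 0 < x → 0 < y → φ x - c * x = φ y - c * y :=
      hconst (fun x => φ x - c * x) hΦ
    refine ⟨φ 1 - c * 1, c, ?_, ?_, ?_⟩
    · intro hc0
      obtain ⟨x, hx, y, hy, hxy⟩ := hnc 0 1 le_rfl one_pos
      apply hxy
      have e1 := hδ x 1 hx.1 one_pos
      have e2 := hδ y 1 hy.1 one_pos
      rw [hc0] at e1 e2
      linarith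
    · intro x hx
      have := hδ x 1 hx one_pos
      linarith
    · intro s t hs hst
      rw [hfF s t hs hst, hF1 (t - s) (by linarith)]
  · -- exponential case
    right
    have hF1ne : F 1 ≠ 1 := by
      intro h
      apply hL0
      rw [hLdef, h, Real.log_one]
    have hdenne : 1 - F 1 ≠ 0 := by
      intro h
      apply hF1ne
      linarith
    set δ : ℝ := C 1 / (1 - F 1) with hδdef
    have hCδ : ∀ h : ℝ, 0 < h → C h = δ * (1 - F h) := by
      intro h hh
      have e1 := (hmul h 1 hh one_pos).2
      have e2 := (hmul 1 h one_pos hh).2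
      rw [show (1:ℝ) + h = h + 1 by ring] at e2
      rw [e2] at e1
      -- e1 : F h * C 1 + C h = F 1 * C h + C 1
      rw [hδdef]
      field_simp
      linarith
    have hΦ : ∀ x h : ℝ, 0 < x → 0 < h →
        (φ (x + h) - δ) * Real.exp (-L * (x + h)) = (φ x - δ) * Real.exp (-L * x) := by
      intro x h hx hh
      have h1 := hFCg h hh x hx
      rw [hCδ h hh, hFexp h hh] at h1
      have e : φ (x + h) - δ = Real.exp (L * h) * (φ x - δ) := by linarith [h1]
      rw [e, mul_comm (Real.exp (L * h)) (φ x - δ), mul_assoc, ← Real.exp_add]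
      congr 1
      ring
    have hα : ∀ x y : ℝ, 0 < x → 0 < y →
        (φ x - δ) * Real.exp (-L * x) = (φ y - δ) * Real.exp (-L * y) :=
      hconst (fun x => (φ x - δ) * Real.exp (-L * x)) hΦ
    set α : ℝ := (φ 1 - δ) * Real.exp (-L * 1) with hαdef
    have hφx : ∀ x : ℝ, 0 < x → φ x = δ + α * Real.exp (L * x) := by
      intro x hx
      have := (hα x 1 hx one_pos).trans hαdef.symm
      have e2 : (φ x - δ) = α * Real.exp (L * x) := by
        have hne : Real.exp (-L * x) ≠ 0 := Real.exp_ne_zero _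
        have : (φ x - δ) * Real.exp (-L * x) * Real.exp (L * x)
            = α * Real.exp (L * x) := by rw [this]
        rw [mul_assoc, ← Real.exp_add] at this
        simpa using this
      linarith
    refine ⟨δ, α, -L, by simpa using hL0, ?_, ?_, ?_⟩
    · intro hα0
      obtain ⟨x, hx, y, hy, hxy⟩ := hnc 0 1 le_rfl one_pos
      apply hxy
      rw [hφx x hx.1, hφx y hy.1, hα0]
      ring
    · intro x hx
      rw [hφx x hx]
      ring_nf
    · intro s t hs hst
      rw [hfF s t hs hst, hFexp (t - s) (by linarith)]
      ring_nf
end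

section
/- Let α, β > 0 with α ≠ β and λ₀ ∈ ℝ. A continuous function y : [0,∞) → ℝ satisfies the renewal equation y(t) = λ₀ + ∫₀^t α·exp(−β(t−u))·y(u) du for all t ≥ 0 if and only if y(t) = λ₀·exp((α−β)t) + (βλ₀/(α−β))·(exp((α−β)t) − 1) for all t ≥ 0. -/
open MeasureTheory intervalIntegral

lemma int_exp (c : ℝ) (hc : c ≠ 0) (t : ℝ) :
    ∫ u in (0:ℝ)..t, Real.exp (c * u) = (Real.exp (c * t) - 1) / c := by
  have h : ∀ x ∈ Set.uIcc (0:ℝ) t,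
      HasDerivAt (fun u => Real.exp (c * u) / c) (Real.exp (c * x)) x := by
    intro x _
    have h1 : HasDerivAt (fun u : ℝ => c * u) c x := by
      simpa using (hasDerivAt_id x).const_mul c
    have := ((Real.hasDerivAt_exp (c * x)).comp x h1).div_const c
    simpa [mul_comm, mul_div_assoc, mul_div_cancel_left₀ _ hc] using this
  rw [intervalIntegral.integral_eq_sub_of_hasDerivAt h
    ((Real.continuous_exp.comp (continuous_const.mul continuous_id)).intervalIntegrable 0 t)]
  simp [sub_div]

lemma backward (α β lam0 : ℝ) (hα : 0 < α) (hβ : 0 < β) (hαβ : α ≠ β)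
    (t : ℝ) (ht : 0 ≤ t) :
    lam0 * Real.exp ((α - β) * t) + β * lam0 / (α - β) * (Real.exp ((α - β) * t) - 1)
      = lam0 + ∫ u in (0:ℝ)..t, α * Real.exp (-β * (t - u)) *
          (lam0 * Real.exp ((α - β) * u) + β * lam0 / (α - β) * (Real.exp ((α - β) * u) - 1)) := by
  have hab : α - β ≠ 0 := sub_ne_zero.mpr hαβ
  set c : ℝ := β * lam0 / (α - β) with hc
  have key : ∀ u : ℝ, α * Real.exp (-β * (t - u)) *
      (lam0 * Real.exp ((α - β) * u) + c * (Real.exp ((α - β) * u) - 1))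
      = α * Real.exp (-β * t) * (lam0 + c) * Real.exp (α * u)
        - α * Real.exp (-β * t) * c * Real.exp (β * u) := by
    intro u
    have e1 : Real.exp (-β * (t - u)) = Real.exp (-β * t) * Real.exp (β * u) := by
      rw [← Real.exp_add]; ring_nf
    have e2 : Real.exp (α * u) = Real.exp (β * u) * Real.exp ((α - β) * u) := by
      rw [← Real.exp_add]; ring_nf
    rw [e1, e2]; ring
  simp only [key]
  rw [intervalIntegral.integral_sub, intervalIntegral.integral_const_mul,
    intervalIntegral.integral_const_mul, int_exp α hα.ne' t, int_exp β hβ.ne' t]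
  · have hEb : Real.exp (β * t) ≠ 0 := (Real.exp_pos _).ne'
    have e3 : Real.exp ((α - β) * t) = Real.exp (α * t) / Real.exp (β * t) := by
      rw [← Real.exp_sub]; ring_nf
    have e4 : Real.exp (-β * t) = 1 / Real.exp (β * t) := by
      rw [show -β * t = -(β * t) by ring, Real.exp_neg]; field_simp
    rw [e3, e4, hc]
    field_simp
    ring
  · exact (Continuous.intervalIntegrable (by continuity) 0 t)
  · exact (Continuous.intervalIntegrable (by continuity) 0 t)

lemma forward (α β lam0 : ℝ) (hα : 0 < α) (hβ : 0 < β) (hαβ : α ≠ β)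
    (y : ℝ → ℝ) (hy : ContinuousOn y (Set.Ici 0))
    (hyp : ∀ t ∈ Set.Ici (0 : ℝ),
        y t = lam0 + ∫ u in (0 : ℝ)..t, α * Real.exp (-β * (t - u)) * y u)
    (t : ℝ) (ht : 0 ≤ t) :
    y t = lam0 * Real.exp ((α - β) * t)
          + β * lam0 / (α - β) * (Real.exp ((α - β) * t) - 1) := by
  have hab : α - β ≠ 0 := sub_ne_zero.mpr hαβ
  have hba : β - α ≠ 0 := sub_ne_zero.mpr (Ne.symm hαβ)
  set g : ℝ → ℝ := fun u => Real.exp (β * u) * y u with hgdef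
  have hg : ContinuousOn g (Set.Ici 0) :=
    ((Real.continuous_exp.comp (continuous_const.mul continuous_id)).continuousOn).mul hy
  have hgint : ∀ s, 0 ≤ s → IntervalIntegrable g volume 0 s := by
    intro s hs
    exact (hg.mono (by rw [Set.uIcc_of_le hs]; exact Set.Icc_subset_Ici_self)).intervalIntegrable
  set F : ℝ → ℝ := fun s => ∫ u in (0:ℝ)..s, g u with hFdef
  have star : ∀ s, 0 ≤ s → y s = lam0 + α * Real.exp (-β * s) * F s := by
    intro s hs
    rw [hyp s hs]
    congr 1
    have key : ∀ u : ℝ, α * Real.exp (-β * (s - u)) * y u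
        = (α * Real.exp (-β * s)) * g u := by
      intro u
      have e1 : Real.exp (-β * (s - u)) = Real.exp (-β * s) * Real.exp (β * u) := by
        rw [← Real.exp_add]; ring_nf
      simp only [hgdef, e1]; ring
    simp only [key]
    rw [intervalIntegral.integral_const_mul]
  have hFd : ∀ s, 0 ≤ s → HasDerivWithinAt F (g s) (Set.Ici s) s := by
    intro s hs
    have hsub : Set.Ioi s ⊆ Set.Ici (0:ℝ) :=
      fun u hu => le_trans hs (le_of_lt hu)
    exact intervalIntegral.integral_hasDerivWithinAt_right (hgint s hs)
      ⟨Set.Ici s, Filter.mem_of_superset self_mem_nhdsWithin Set.Ioi_subset_Ici_self,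
        (hg.mono (Set.Ici_subset_Ici.mpr hs)).aestronglyMeasurable measurableSet_Ici⟩
      ((hg s hs).mono hsub)
  set H : ℝ → ℝ := fun s =>
    Real.exp (-α * s) * F s - lam0 * (Real.exp ((β - α) * s) - 1) / (β - α) with hHdef
  have hH0 : H 0 = 0 := by simp [hHdef, hFdef]
  have hHcont : ContinuousOn H (Set.Icc 0 t) := by
    apply ContinuousOn.sub
    · apply ContinuousOn.mul
      · exact (Real.continuous_exp.comp (continuous_const.mul continuous_id)).continuousOn
      · have := continuousOn_primitive_interval'
          (μ := volume) (f := g) (hgint t ht) (Set.left_mem_uIcc)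
        exact this.mono (by rw [Set.uIcc_of_le ht])
    · exact (by continuity : Continuous fun s => lam0 * (Real.exp ((β - α) * s) - 1) / (β - α)).continuousOn
  have hderiv : ∀ x ∈ Set.Ico (0:ℝ) t, HasDerivWithinAt H 0 (Set.Ici x) x := by
    intro x hx
    have hx0 : (0:ℝ) ≤ x := hx.1
    have h1 : HasDerivWithinAt (fun s => Real.exp (-α * s)) (-α * Real.exp (-α * x))
        (Set.Ici x) x := by
      have hl : HasDerivAt (fun s : ℝ => -α * s) (-α) x := by
        simpa using (hasDerivAt_id x).const_mul (-α)
      have h1' := (Real.hasDerivAt_exp (-α * x)).comp x hl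
      have : Real.exp (-α * x) * (-α) = -α * Real.exp (-α * x) := by ring
      rw [this] at h1'
      exact h1'.hasDerivWithinAt
    have h2 := h1.mul (hFd x hx0)
    have h3 : HasDerivWithinAt (fun s => lam0 * (Real.exp ((β - α) * s) - 1) / (β - α))
        (lam0 * Real.exp ((β - α) * x)) (Set.Ici x) x := by
      have hl : HasDerivAt (fun s : ℝ => (β - α) * s) (β - α) x := by
        simpa using (hasDerivAt_id x).const_mul (β - α)
      have h4 := ((Real.hasDerivAt_exp ((β - α) * x)).comp x hl).sub_const 1
      have h5 := (h4.const_mul lam0).div_const (β - α)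
      have heq : lam0 * (Real.exp ((β - α) * x) * (β - α)) / (β - α)
          = lam0 * Real.exp ((β - α) * x) := by field_simp
      rw [heq] at h5
      exact h5.hasDerivWithinAt
    have h6 := h2.sub h3
    refine h6.congr_deriv ?_
    have hgx : g x = lam0 * Real.exp (β * x) + α * F x := by
      have eb : Real.exp (-β * x) = 1 / Real.exp (β * x) := by
        rw [show -β * x = -(β * x) by ring, Real.exp_neg]; field_simp
      simp only [hgdef]
      rw [star x hx0, eb]
      field_simp
    rw [hgx]
    have e5 : Real.exp ((β - α) * x) = Real.exp (β * x) * Real.exp (-α * x) := by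
      rw [← Real.exp_add]; ring_nf
    rw [e5]; ring
  have hHt : H t = 0 := by
    rw [← hH0]
    exact constant_of_has_deriv_right_zero hHcont hderiv t ⟨ht, le_refl t⟩
  -- extract F t
  have hEa : Real.exp (α * t) ≠ 0 := (Real.exp_pos _).ne'
  have hEb : Real.exp (β * t) ≠ 0 := (Real.exp_pos _).ne'
  have h7 : Real.exp (-α * t) * F t = lam0 * (Real.exp ((β - α) * t) - 1) / (β - α) := by
    have h := hHt
    simp only [hHdef] at h
    linarith
  have hFt : F t = lam0 * (Real.exp (β * t) - Real.exp (α * t)) / (β - α) := by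
    have h8 := congrArg (fun z => Real.exp (α * t) * z) h7
    rw [← mul_assoc, ← Real.exp_add, show α * t + -α * t = 0 by ring,
      Real.exp_zero, one_mul] at h8
    rw [h8, show (β - α) * t = β * t - α * t by ring, Real.exp_sub]
    field_simp
  rw [star t ht, hFt]
  have e3 : Real.exp ((α - β) * t) = Real.exp (α * t) / Real.exp (β * t) := by
    rw [← Real.exp_sub]; ring_nf
  have e4 : Real.exp (-β * t) = 1 / Real.exp (β * t) := by
    rw [show -β * t = -(β * t) by ring, Real.exp_neg]; field_simp
  rw [e3, e4]
  field_simp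
  ring

/-- For α, β > 0 with α ≠ β, a continuous function y on [0,∞) satisfies
the renewal equation y(t) = λ₀ + ∫₀^t α·exp(−β(t−u))·y(u) du for all t ≥ 0 if and only
if y(t) = λ₀·exp((α−β)t) + (βλ₀/(α−β))·(exp((α−β)t) − 1) for all t ≥ 0. -/
theorem stmt_7 (α β lam0 : ℝ) (hα : 0 < α) (hβ : 0 < β) (hαβ : α ≠ β)
    (y : ℝ → ℝ) (hy : ContinuousOn y (Set.Ici 0)) :
    (∀ t ∈ Set.Ici (0 : ℝ),
        y t = lam0 + ∫ u in (0 : ℝ)..t, α * Real.exp (-β * (t - u)) * y u) ↔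
    (∀ t ∈ Set.Ici (0 : ℝ),
        y t = lam0 * Real.exp ((α - β) * t)
          + β * lam0 / (α - β) * (Real.exp ((α - β) * t) - 1)) := by
  constructor
  · intro hyp t ht
    exact forward α β lam0 hα hβ hαβ y hy hyp t ht
  · intro hyp t ht
    rw [hyp t ht, backward α β lam0 hα hβ hαβ t ht]
    congr 1
    apply intervalIntegral.integral_congr
    intro u hu
    rw [Set.uIcc_of_le ht] at hu
    simp only
    rw [hyp u hu.1]
end

section
/- Let λ¹₀ > 0, λ²₀, λ³₀ ≥ 0, let α_{kl} ≥ 0 (k,l ∈ {1,2}) with α₂₂ ≤ β₂, let α₃ ≥ 0, and let β₁, β₂, β₃ > 0 with β₁ ≠ β₂. Define A(1,2) = (λ¹₀/β₁)·(α₁₂α₂₁ − α₁₁α₂₂)/(β₁ − β₂) − (λ¹₀/β₁)·α₁₁ − (λ²₀/β₁)·α₂₁, B(1,2) = (λ¹₀/β₂)·(α₁₁α₂₂ − α₁₂α₂₁)/(β₁ − β₂), and C(1,2) = λ¹₀ − A(1,2) − B(1,2). Then the limit as t → ∞ of [ λ³₀ + λ³₀·(1 − exp(−β₃t))·α₃/β₃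 ] / [ C(1,2) + A(1,2)·exp(−β₁t) + B(1,2)·exp(−β₂t) ] exists and equals λ³₀·(α₃ + β₃)·β₁·β₂ / ( β₃·[ λ¹₀β₁β₂ − λ¹₀(α₁₁α₂₂ − α₁₂α₂₁) + β₂(λ¹₀α₁₁ + λ²₀α₂₁) ] ). -/
open Filter

lemma exp_neg_mul_tendsto (b : ℝ) (hb : 0 < b) :
    Tendsto (fun t : ℝ => Real.exp (-b * t)) atTop (nhds 0) :=
  Real.tendsto_exp_atBot.comp (Tendsto.const_mul_atTop_of_neg (neg_neg_iff_pos.mpr hb) tendsto_id)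

/-- the limit as t → ∞ of E[λ³(t)]/E[λ¹(t)] exists and equals the
closed-form critical fitness level f_c. Here
E[λ³(t)] = λ³₀ + λ³₀(1 − e^{−β₃t})α₃/β₃ and
E[λ¹(t)] = C(1,2) + A(1,2)e^{−β₁t} + B(1,2)e^{−β₂t}. -/
theorem stmt_12 (l1 l2 l3 a11 a12 a21 a22 a3 b1 b2 b3 A B C : ℝ)
    (hl1 : 0 < l1) (hl2 : 0 ≤ l2) (hl3 : 0 ≤ l3)
    (ha11 : 0 ≤ a11) (ha12 : 0 ≤ a12) (ha21 : 0 ≤ a21) (ha22 : 0 ≤ a22)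
    (ha22b2 : a22 ≤ b2) (ha3 : 0 ≤ a3)
    (hb1 : 0 < b1) (hb2 : 0 < b2) (hb3 : 0 < b3) (hb12 : b1 ≠ b2)
    (hA : A = l1 / b1 * ((a12 * a21 - a11 * a22) / (b1 - b2))
        - l1 / b1 * a11 - l2 / b1 * a21)
    (hB : B = l1 / b2 * ((a11 * a22 - a12 * a21) / (b1 - b2)))
    (hC : C = l1 - A - B) :
    Tendsto
      (fun t : ℝ =>
        (l3 + l3 * (1 - Real.exp (-b3 * t)) * a3 / b3) /
          (C + A * Real.exp (-b1 * t) + B * Real.exp (-b2 * t)))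
      atTop
      (nhds (l3 * (a3 + b3) * b1 * b2 /
        (b3 * (l1 * b1 * b2 - l1 * (a11 * a22 - a12 * a21)
          + b2 * (l1 * a11 + l2 * a21))))) := by
  set D : ℝ := l1 * b1 * b2 - l1 * (a11 * a22 - a12 * a21) + b2 * (l1 * a11 + l2 * a21) with hD
  have hDpos : 0 < D := by
    have h1 : 0 ≤ l1 * a11 * (b2 - a22) := mul_nonneg (mul_nonneg hl1.le ha11) (sub_nonneg.mpr ha22b2)
    have h2 : 0 ≤ l1 * (a12 * a21) := by positivity
    have h3 : 0 ≤ b2 * (l2 * a21) := by positivity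
    have h4 : 0 < l1 * b1 * b2 := by positivity
    nlinarith [h1, h2, h3, h4]
  have hb12' : b1 - b2 ≠ 0 := sub_ne_zero.mpr hb12
  have hCval : C = D / (b1 * b2) := by
    subst hC hA hB
    field_simp
    ring
  have hCpos : 0 < C := by
    rw [hCval]; positivity
  have hnum : Tendsto (fun t : ℝ => l3 + l3 * (1 - Real.exp (-b3 * t)) * a3 / b3)
      atTop (nhds (l3 + l3 * (1 - 0) * a3 / b3)) := by
    exact tendsto_const_nhds.add
      ((((tendsto_const_nhds.sub (exp_neg_mul_tendsto b3 hb3)).const_mul l3).mul_const a3).div_const b3)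
  have hden : Tendsto (fun t : ℝ => C + A * Real.exp (-b1 * t) + B * Real.exp (-b2 * t))
      atTop (nhds (C + A * 0 + B * 0)) := by
    exact (tendsto_const_nhds.add ((exp_neg_mul_tendsto b1 hb1).const_mul A)).add
      ((exp_neg_mul_tendsto b2 hb2).const_mul B)
  have h := hnum.div hden (by simpa using hCpos.ne')
  convert h using 2
  · rfl
  rw [hCval]
  field_simp
  simp only [mul_zero, zero_mul, add_zero, sub_zero, mul_one]
  rw [eq_div_iff hDpos.ne']
  ring
end
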